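/- Let X = ℝ \ {0}, and define x ≼ y iff |x| ≤ |y| and sgn(x) ≤ sgn(y), where sgn(x) = 1 if x > 0 and sgn(x) = −1 if x < 0. Then, although (|·|, sgn) is a multi-utility for (X,≼) of cardinality 2, (X,≼) has no finite strict monotone multi-utility: for every natural number N and every family (vⱼ)ⱼ₌₁,…,N of strict monotones for ≼, it is not the case that for all x, y ∈ X one has x ≼ y iff vⱼ(x) ≤ vⱼ(y) for all j = 1,…,N. -/
import Mathlib

/-- A binary relation is a partial order: reflexive, antisymmetric, transitive. -/
def IsPartialOrderRel {X : Type*} (r : X → X → Prop) : Prop :=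
  (∀ x, r x x) ∧ (∀ x y, r x y → r y x → x = y) ∧ (∀ x y z, r x y → r y z → r x z)

/-- `r'` extends `r`. -/
def RelExtends {X : Type*} (r r' : X → X → Prop) : Prop :=
  ∀ x y, r x y → r' x y

/-- `r` is total: any two elements are comparable. -/
def TotalRel {X : Type*} (r : X → X → Prop) : Prop :=
  ∀ x y, r x y ∨ r y x

/-- `r'` is a linear extension of `r`: a total partial order extending `r`. -/
def IsLinearExtension {X : Type*} (r r' : X → X → Prop) : Prop :=
  IsPartialOrderRel r' ∧ TotalRel r' ∧ RelExtends r r'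

/-- `x` and `y` are incomparable with respect to `r`. -/
def Incomp {X : Type*} (r : X → X → Prop) (x y : X) : Prop :=
  ¬ r x y ∧ ¬ r y x

/-- `D` is Debreu dense for `r`. -/
def DebreuDense {X : Type*} (r : X → X → Prop) (D : Set X) : Prop :=
  ∀ x y, r x y → ¬ r y x → ∃ d ∈ D, r x d ∧ r d y

/-- `(X, r)` is Debreu separable: it has a countable Debreu dense subset. -/
def DebreuSeparable {X : Type*} (r : X → X → Prop) : Prop :=
  ∃ D : Set X, D.Countable ∧ DebreuDense r D

/-- The limit of a sequence of binary relations. -/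
def LimitRel {X : Type*} (r : ℕ → X → X → Prop) : X → X → Prop :=
  fun x y => ∃ n₀ : ℕ, ∀ n, n₀ ≤ n → r n x y

/-- The ground set `ℝ \ {0}`. -/
abbrev NzReal : Type := {x : ℝ // x ≠ 0}

/-- Absolute value on `ℝ \ {0}`. -/
def absFn : NzReal → ℝ := fun x => |x.1|

/-- Sign function: `1` on positives, `-1` on negatives. -/
noncomputable def sgnFn : NzReal → ℝ := fun x => if 0 < x.1 then 1 else -1

/-- The partial order: `x ≼ y` iff `|x| ≤ |y|` and `sgn x ≤ sgn y`. -/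
noncomputable def rGeo : NzReal → NzReal → Prop := fun x y =>
  absFn x ≤ absFn y ∧ sgnFn x ≤ sgnFn y

theorem rGeo_no_finite_strictMonotoneMultiUtility :
    (∀ x y, rGeo x y ↔ (absFn x ≤ absFn y ∧ sgnFn x ≤ sgnFn y)) ∧
    (∀ (N : ℕ) (v : Fin N → NzReal → ℝ),
      (∀ j, (∀ x y, rGeo x y → v j x ≤ v j y) ∧
            (∀ x y, rGeo x y → ¬ rGeo y x → v j x < v j y)) →
      ¬ (∀ x y, rGeo x y ↔ ∀ j, v j x ≤ v j y)) := by
  constructor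
  · intro x y; exact Iff.rfl
  · intro N v hv h
    classical
    -- positive and negative elements indexed exponentially by all of ℝ
    set P : ℝ → NzReal := fun t => ⟨Real.exp t, (Real.exp_pos t).ne'⟩ with hPdef
    set M : ℝ → NzReal := fun t => ⟨-Real.exp t, by simpa using (Real.exp_pos t).ne'⟩
      with hMdef
    have habsP : ∀ t, absFn (P t) = Real.exp t := fun t =>
      abs_of_pos (Real.exp_pos t)
    have habsM : ∀ t, absFn (M t) = Real.exp t := by
      intro t
      show |(-Real.exp t)| = Real.exp t
      rw [abs_neg]; exact abs_of_pos (Real.exp_pos t)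
    have hsgnP : ∀ t, sgnFn (P t) = 1 := fun t => if_pos (Real.exp_pos t)
    have hsgnM : ∀ t, sgnFn (M t) = -1 := by
      intro t
      have : ¬ (0 < -Real.exp t) := by simpa using (Real.exp_pos t).le
      exact if_neg this
    -- each (M t, P t) is a jump: M t ≺ P t
    have hjump : ∀ (j : Fin N) (t : ℝ), v j (M t) < v j (P t) := by
      intro j t
      refine (hv j).2 (M t) (P t) ⟨?_, ?_⟩ ?_
      · rw [habsM, habsP]
      · rw [hsgnM, hsgnP]; norm_num
      · intro hc
        have := hc.2
        rw [hsgnP, hsgnM] at this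
        linarith
    -- choose a rational in each jump interval
    have hq : ∀ t : ℝ, ∃ q : Fin N → ℚ,
        ∀ j, v j (M t) < (q j : ℝ) ∧ (q j : ℝ) < v j (P t) := by
      intro t
      choose q hq1 hq2 using fun j => exists_rat_btwn (hjump j t)
      exact ⟨q, fun j => ⟨hq1 j, hq2 j⟩⟩
    choose Q hQ using hq
    -- key: Q is injective
    have hkey : ∀ t t' : ℝ, t < t' → Q t ≠ Q t' := by
      intro t t' hlt hQeq
      -- M t' is not below P t since its absolute value is bigger
      have hnot : ¬ rGeo (M t') (P t) := by
        intro hc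
        have := hc.1
        rw [habsM, habsP] at this
        exact absurd this (not_le.2 (Real.exp_lt_exp.2 hlt))
      have : ¬ ∀ j, v j (M t') ≤ v j (P t) := fun hc => hnot ((h (M t') (P t)).2 hc)
      push_neg at this
      obtain ⟨j, hj⟩ := this
      have h1 : (Q t j : ℝ) < v j (P t) := (hQ t j).2
      have h2 : v j (M t') < (Q t' j : ℝ) := (hQ t' j).1
      have : (Q t j : ℝ) < (Q t' j : ℝ) := by linarith
      rw [hQeq] at this
      exact lt_irrefl _ this
    have hinj : Function.Injective Q := by
      intro t t' hQeq
      by_contra hne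
      rcases lt_or_gt_of_ne hne with hlt | hlt
      · exact hkey t t' hlt hQeq
      · exact hkey t' t hlt hQeq.symm
    have : Countable ℝ := Function.Injective.countable hinj
    exact not_countable this
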